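/- Let $n \geq 2$ and let $U \subseteq GL_n(\mathbb{C})$ be the group of unipotent upper triangular matrices. For upper triangular $n \times n$ matrices $A_1 = (a_{ij})$, $A_2 = (b_{ij})$, $A_3 = (c_{ij})$, define $g(A_1,A_2,A_3) = (a_{11}b_{22} - a_{22}b_{11})c_{12} + (c_{11}a_{22} - c_{22}a_{11})b_{12} + (b_{11}c_{22} - b_{22}c_{11})a_{12}$. Then for all $u, v \in U$, $g(u A_1 v^{-1}, u A_2 v^{-1}, u A_3 v^{-1}) = g(A_1, A_2, A_3)$. -/

import Mathlib

open Matrix Finset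

section aux
variable {n : ℕ} (hn : 2 ≤ n)

/-- entries of product with triangular matrices -/
theorem tri_entries {U A W : Matrix (Fin n) (Fin n) ℂ}
    (hU : ∀ i j : Fin n, j < i → U i j = 0) (hUd : ∀ i : Fin n, U i i = 1)
    (hA : ∀ i j : Fin n, j < i → A i j = 0)
    (hW : ∀ i j : Fin n, j < i → W i j = 0) (hWd : ∀ i : Fin n, W i i = 1) :
    (U * A * W) ⟨0, Nat.lt_of_lt_of_le Nat.zero_lt_two hn⟩ ⟨0, Nat.lt_of_lt_of_le Nat.zero_lt_two hn⟩ = A ⟨0, Nat.lt_of_lt_of_le Nat.zero_lt_two hn⟩ ⟨0, Nat.lt_of_lt_of_le Nat.zero_lt_two hn⟩ ∧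
    (U * A * W) ⟨1, Nat.lt_of_lt_of_le Nat.one_lt_two hn⟩ ⟨1, Nat.lt_of_lt_of_le Nat.one_lt_two hn⟩ = A ⟨1, Nat.lt_of_lt_of_le Nat.one_lt_two hn⟩ ⟨1, Nat.lt_of_lt_of_le Nat.one_lt_two hn⟩ ∧
    (U * A * W) ⟨0, Nat.lt_of_lt_of_le Nat.zero_lt_two hn⟩ ⟨1, Nat.lt_of_lt_of_le Nat.one_lt_two hn⟩ =
      A ⟨0, Nat.lt_of_lt_of_le Nat.zero_lt_two hn⟩ ⟨0, Nat.lt_of_lt_of_le Nat.zero_lt_two hn⟩ * W ⟨0, Nat.lt_of_lt_of_le Nat.zero_lt_two hn⟩ ⟨1, Nat.lt_of_lt_of_le Nat.one_lt_two hn⟩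
      + A ⟨0, Nat.lt_of_lt_of_le Nat.zero_lt_two hn⟩ ⟨1, Nat.lt_of_lt_of_le Nat.one_lt_two hn⟩
      + U ⟨0, Nat.lt_of_lt_of_le Nat.zero_lt_two hn⟩ ⟨1, Nat.lt_of_lt_of_le Nat.one_lt_two hn⟩ * A ⟨1, Nat.lt_of_lt_of_le Nat.one_lt_two hn⟩ ⟨1, Nat.lt_of_lt_of_le Nat.one_lt_two hn⟩ := by
  set i0 : Fin n := ⟨0, Nat.lt_of_lt_of_le Nat.zero_lt_two hn⟩ with hi0
  set i1 : Fin n := ⟨1, Nat.lt_of_lt_of_le Nat.one_lt_two hn⟩ with hi1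
  have h01 : i0 < i1 := by simp [hi0, hi1, Fin.lt_def]
  have hUA00 : (U * A) i0 i0 = A i0 i0 := by
    rw [mul_apply]
    rw [Finset.sum_eq_single_of_mem i0 (mem_univ _)]
    · rw [hUd]; ring
    · intro k _ hk
      have : i0 < k := by
        rw [Fin.lt_def]; rcases Nat.eq_zero_or_pos k.val with h | h
        · exact absurd (Fin.ext h) hk
        · simpa [hi0]
      rw [hA k i0 this, mul_zero]
  have hUA01 : (U * A) i0 i1 = A i0 i1 + U i0 i1 * A i1 i1 := by
    rw [mul_apply]
    rw [← Finset.sum_subset (subset_univ {i0, i1})]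
    · rw [Finset.sum_pair (ne_of_lt h01), hUd]; ring
    · intro k _ hk
      simp only [mem_insert, mem_singleton, not_or] at hk
      have : i1 < k := by
        rw [Fin.lt_def]
        have h0 : k.val ≠ 0 := fun h => hk.1 (Fin.ext h)
        have h1 : k.val ≠ 1 := fun h => hk.2 (Fin.ext h)
        simp only [hi1, Fin.val_mk]; omega
      rw [hA k i1 this, mul_zero]
  refine ⟨?_, ?_, ?_⟩
  · rw [mul_apply]
    rw [Finset.sum_eq_single_of_mem i0 (mem_univ _)]
    · rw [hWd, hUA00]; ring
    · intro l _ hl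
      have : i0 < l := by
        rw [Fin.lt_def]; rcases Nat.eq_zero_or_pos l.val with h | h
        · exact absurd (Fin.ext h) hl
        · simpa [hi0]
      rw [hW l i0 this, mul_zero]
  · rw [mul_apply]
    rw [Finset.sum_eq_single_of_mem i1 (mem_univ _)]
    · rw [hWd, mul_apply]
      rw [Finset.sum_eq_single_of_mem i1 (mem_univ _)]
      · rw [hUd]; ring
      · intro k _ hk
        rcases lt_or_gt_of_ne hk with h | h
        · rw [hU i1 k h, zero_mul]
        · rw [hA k i1 h, mul_zero]
    · intro l _ hl
      rcases lt_or_gt_of_ne hl with h | h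
      · -- l < i1, so l = i0; (U*A) i1 i0 = 0
        have hl0 : l = i0 := by
          rw [Fin.lt_def] at h; simp only [hi1, Fin.val_mk] at h
          exact Fin.ext (by simp only [hi0, Fin.val_mk]; omega)
        subst hl0
        rw [mul_apply]
        rw [Finset.sum_eq_zero, zero_mul]
        intro k _
        rcases Nat.eq_zero_or_pos k.val with h'' | h''
        · have : k = i0 := Fin.ext h''
          subst this; rw [hU i1 i0 h01, zero_mul]
        · rw [hA k i0 (by rw [Fin.lt_def]; simpa [hi0]), mul_zero]
      · rw [hW l i1 h, mul_zero]
  · rw [mul_apply]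
    rw [← Finset.sum_subset (subset_univ {i0, i1})]
    · rw [Finset.sum_pair (ne_of_lt h01), hWd, hUA00, hUA01]; ring
    · intro l _ hl
      simp only [mem_insert, mem_singleton, not_or] at hl
      have : i1 < l := by
        rw [Fin.lt_def]
        have h0 : l.val ≠ 0 := fun h => hl.1 (Fin.ext h)
        have h1 : l.val ≠ 1 := fun h => hl.2 (Fin.ext h)
        simp only [hi1, Fin.val_mk]; omega
      rw [hW l i1 this, mul_zero]
end aux

theorem stmt1 {n : ℕ} (hn : 2 ≤ n)
    (A₁ A₂ A₃ : Matrix (Fin n) (Fin n) ℂ)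
    (hA₁ : ∀ i j : Fin n, j < i → A₁ i j = 0)
    (hA₂ : ∀ i j : Fin n, j < i → A₂ i j = 0)
    (hA₃ : ∀ i j : Fin n, j < i → A₃ i j = 0)
    (u v : Matrix (Fin n) (Fin n) ℂ)
    (hu : ∀ i j : Fin n, j < i → u i j = 0) (hud : ∀ i : Fin n, u i i = 1)
    (hv : ∀ i j : Fin n, j < i → v i j = 0) (hvd : ∀ i : Fin n, v i i = 1) :
    let i0 : Fin n := ⟨0, by omega⟩
    let i1 : Fin n := ⟨1, by omega⟩
    let g : Matrix (Fin n) (Fin n) ℂ → Matrix (Fin n) (Fin n) ℂ →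
        Matrix (Fin n) (Fin n) ℂ → ℂ := fun A B C =>
      (A i0 i0 * B i1 i1 - A i1 i1 * B i0 i0) * C i0 i1
        + (C i0 i0 * A i1 i1 - C i1 i1 * A i0 i0) * B i0 i1
        + (B i0 i0 * C i1 i1 - B i1 i1 * C i0 i0) * A i0 i1
    g (u * A₁ * v⁻¹) (u * A₂ * v⁻¹) (u * A₃ * v⁻¹) = g A₁ A₂ A₃ := by
  intro i0 i1 g
  -- v is invertible
  have hvbt : v.BlockTriangular id := fun i j h => hv i j h
  have hdet : v.det = 1 := by
    rw [Matrix.det_of_upperTriangular hvbt]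
    simp [hvd]
  have hunit : IsUnit v.det := by rw [hdet]; exact isUnit_one
  haveI : Invertible v := v.invertibleOfIsUnitDet hunit
  have hwbt : (v⁻¹).BlockTriangular id := Matrix.blockTriangular_inv_of_blockTriangular hvbt
  have hW : ∀ i j : Fin n, j < i → v⁻¹ i j = 0 := fun i j h => hwbt h
  have hvw : v * v⁻¹ = 1 := Matrix.mul_nonsing_inv v hunit
  have h01 : i0 < i1 := by simp [i0, i1, Fin.lt_def]
  -- diagonal entries of v⁻¹ at i0 i1 and entry (i0,i1)
  have hWd : ∀ i : Fin n, v⁻¹ i i = 1 := by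
    intro i
    have := congrFun (congrFun hvw i) i
    rw [mul_apply] at this
    rw [Finset.sum_eq_single_of_mem i (Finset.mem_univ _)] at this
    · rw [hvd] at this; simpa using this
    · intro k _ hk
      rcases lt_or_gt_of_ne hk with h | h
      · rw [hv i k h, zero_mul]
      · rw [hW k i h, mul_zero]
  have hw11 : v⁻¹ i1 i1 = 1 := hWd i1
  have hw01 : v⁻¹ i0 i1 = - v i0 i1 := by
    have := congrFun (congrFun hvw i0) i1
    rw [mul_apply] at this
    rw [← Finset.sum_subset (Finset.subset_univ {i0, i1})] at this
    · rw [Finset.sum_pair (ne_of_lt h01), hvd, hw11] at this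
      have h10 : (1 : Matrix (Fin n) (Fin n) ℂ) i0 i1 = 0 := by
        simp [Matrix.one_apply, ne_of_lt h01]
      rw [h10] at this
      linear_combination this
    · intro k _ hk
      simp only [Finset.mem_insert, Finset.mem_singleton, not_or] at hk
      have : i1 < k := by
        rw [Fin.lt_def]
        have h0 : k.val ≠ 0 := fun h => hk.1 (Fin.ext h)
        have h1 : k.val ≠ 1 := fun h => hk.2 (Fin.ext h)
        show (1:ℕ) < k.val; omega
      rw [hW k i1 this, mul_zero]
  obtain ⟨e1a, e1b, e1c⟩ := tri_entries hn hu hud hA₁ hW hWd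
  obtain ⟨e2a, e2b, e2c⟩ := tri_entries hn hu hud hA₂ hW hWd
  obtain ⟨e3a, e3b, e3c⟩ := tri_entries hn hu hud hA₃ hW hWd
  simp only [g, i0, i1, e1a, e1b, e1c, e2a, e2b, e2c, e3a, e3b, e3c]
  ring
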